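/- Continuous q²-Hermite identification: q^{-n/2} (-q;q)_n R_n(z; q^{1/2}, -q^{1/2}, 0, 0 | q) = H_n((z+z^{-1})/2 | q²), where H_n(·|q) denotes the continuous q-Hermite polynomial defined by H_n((z+z^{-1})/2 | q) = Σ_{k=0}^n [(q;q)_n / ((q;q)_k (q;q)_{n-k})] z^{n-2k}. -/

import Mathlib

/-- q-shifted factorial `(b;q)_k`. -/
noncomputable def qp (q b : ℂ) (k : ℕ) : ℂ := ∏ j ∈ Finset.range k, (1 - b * q ^ j)

/-- Askey–Wilson polynomial `R_n(z;a,b,c,d|q)` as a terminating ₄φ₃ sum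
(with `c = d = 0` it degenerates to the stated ₃φ₂ with one lower parameter 0). -/
noncomputable def AW (q a b c d z : ℂ) (n : ℕ) : ℂ :=
  ∑ k ∈ Finset.range (n + 1),
    qp q (q ^ (-(n : ℤ))) k * qp q (q ^ ((n : ℤ) - 1) * (a * b * c * d)) k *
      qp q (a * z) k * qp q (a * z⁻¹) k /
      (qp q q k * qp q (a * b) k * qp q (a * c) k * qp q (a * d) k) * q ^ k

/-- Continuous q-Hermite polynomial `H_n((z+z⁻¹)/2 | q)` as a Laurent sum in `z`. -/
noncomputable def cqHermite (q z : ℂ) (n : ℕ) : ℂ :=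
  ∑ k ∈ Finset.range (n + 1),
    qp q q n / (qp q q k * qp q q (n - k)) * z ^ ((n : ℤ) - 2 * (k : ℤ))

lemma qp_zero (q b : ℂ) : qp q b 0 = 1 := Finset.prod_range_zero _

lemma qp_succ (q b : ℂ) (k : ℕ) : qp q b (k+1) = qp q b k * (1 - b * q ^ k) :=
  Finset.prod_range_succ _ _

lemma qp_base_zero (q : ℂ) (k : ℕ) : qp q 0 k = 1 := by simp [qp]

lemma one_sub_pow_ne (q : ℂ) (hroot : ∀ m : ℕ, 1 ≤ m → q ^ m ≠ 1) (j : ℕ) :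
    1 - q * q ^ j ≠ 0 := by
  intro h
  exact hroot (j+1) (by omega) (by rw [pow_succ]; linear_combination -h)

lemma one_add_pow_ne (q : ℂ) (hroot : ∀ m : ℕ, 1 ≤ m → q ^ m ≠ 1) (j : ℕ) :
    1 + q * q ^ j ≠ 0 := by
  intro h
  exact hroot (2*(j+1)) (by omega) (by
    have : q ^ (j+1) = -1 := by rw [pow_succ]; linear_combination h
    calc q ^ (2*(j+1)) = (q^(j+1))^2 := by rw [← pow_mul]; ring_nf
    _ = 1 := by rw [this]; ring)

lemma qpq_ne (q : ℂ) (hroot : ∀ m : ℕ, 1 ≤ m → q ^ m ≠ 1) (k : ℕ) : qp q q k ≠ 0 :=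
  Finset.prod_ne_zero_iff.mpr fun j _ => one_sub_pow_ne q hroot j

lemma qpnq_ne (q : ℂ) (hroot : ∀ m : ℕ, 1 ≤ m → q ^ m ≠ 1) (k : ℕ) : qp q (-q) k ≠ 0 :=
  Finset.prod_ne_zero_iff.mpr fun j _ => by
    simpa [sub_neg_eq_add] using one_add_pow_ne q hroot j

lemma qp_inv_vanish (q : ℂ) (hq : q ≠ 0) (n k : ℕ) (h : n < k) :
    qp q ((q : ℂ) ^ (-(n:ℤ))) k = 0 := by
  apply Finset.prod_eq_zero (Finset.mem_range.mpr h)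
  rw [zpow_neg, zpow_natCast]
  field_simp
  ring

lemma qp_shift (q : ℂ) (hq : q ≠ 0) (t : ℤ) (m : ℕ) :
    qp q (q ^ (t-1)) (m+1) = (1 - q ^ (t-1)) * qp q (q ^ t) m := by
  unfold qp
  rw [Finset.prod_range_succ']
  simp only [pow_zero, mul_one]
  rw [mul_comm]
  congr 1
  apply Finset.prod_congr rfl
  intro j _
  congr 1
  rw [pow_succ]
  have : q ^ (t-1) * q = q ^ t := by
    rw [← zpow_add_one₀ hq]; ring_nf
  rw [show q ^ (t-1) * (q^j * q) = (q^(t-1)*q) * q^j from by ring, this]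
noncomputable def uu (q s z : ℂ) (k : ℕ) : ℂ :=
  qp q (s*z) k * qp q (s*z⁻¹) k / (qp q q k * qp q (-q) k) * q ^ k

noncomputable def Phi (q s z : ℂ) (n : ℕ) : ℂ :=
  ∑ k ∈ Finset.range (n+2), qp q ((q : ℂ) ^ (-(n:ℤ))) k * uu q s z k

lemma uu_formula (q s z : ℂ) (hs : s ^ 2 = q) (hs0 : s ≠ 0) (hz : z ≠ 0)
    (hroot : ∀ m : ℕ, 1 ≤ m → q ^ m ≠ 1) (k : ℕ) :
    uu q s z (k+1) = uu q s z k *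
      ((1 + q ^ (2*k+1) - q ^ k * (s * (z + z⁻¹))) * q / ((1 - q * q ^ k) * (1 + q * q ^ k))) := by
  have hq : q ≠ 0 := by rw [← hs]; exact pow_ne_zero 2 hs0
  subst hs
  unfold uu
  rw [qp_succ, qp_succ, qp_succ, qp_succ]
  have h1 := qpq_ne _ hroot k
  have h2 := qpnq_ne _ hroot k
  have h3 := one_sub_pow_ne _ hroot k
  have h4 := one_add_pow_ne _ hroot k
  simp only [neg_mul, sub_neg_eq_add]
  field_simp
  ring

lemma uu_succ (q s z : ℂ) (hs : s ^ 2 = q) (hs0 : s ≠ 0) (hz : z ≠ 0)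
    (hroot : ∀ m : ℕ, 1 ≤ m → q ^ m ≠ 1) (k : ℕ) :
    s * (z + z⁻¹) * uu q s z k =
      (q ^ (k:ℕ))⁻¹ * (1 + q ^ (2*k+1)) * uu q s z k
      - (q ^ (k+1:ℕ))⁻¹ * (1 - q ^ (2*k+2)) * uu q s z (k+1) := by
  have hq : q ≠ 0 := by rw [← hs]; exact pow_ne_zero 2 hs0
  rw [uu_formula q s z hs hs0 hz hroot k]
  have h3 := one_sub_pow_ne _ hroot k
  have h4 := one_add_pow_ne _ hroot k
  have h5 : (q:ℂ) ^ k ≠ 0 := pow_ne_zero _ hq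
  have hfac : (1:ℂ) - q ^ (2*k+2) = (1 - q * q ^ k) * (1 + q * q ^ k) := by ring
  rw [hfac]
  have key : ∀ X : ℂ, (q ^ (k+1:ℕ))⁻¹ * ((1 - q * q ^ k) * (1 + q * q ^ k)) *
      (uu q s z k * (X * q / ((1 - q * q ^ k) * (1 + q * q ^ k)))) =
      (q ^ (k:ℕ))⁻¹ * X * uu q s z k := by
    intro X
    field_simp
    ring
  rw [show (q ^ (k+1:ℕ))⁻¹ * ((1 - q * q ^ k) * (1 + q * q ^ k)) *
      (uu q s z k * ((1 + q ^ (2*k+1) - q ^ k * (s * (z + z⁻¹))) * q /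
        ((1 - q * q ^ k) * (1 + q * q ^ k)))) =
      (q ^ (k:ℕ))⁻¹ * (1 + q ^ (2*k+1) - q ^ k * (s * (z + z⁻¹))) * uu q s z k from
    key _]
  field_simp
  ring

lemma coeff_id (q : ℂ) (hq : q ≠ 0) (hroot : ∀ m : ℕ, 1 ≤ m → q ^ m ≠ 1) (n m : ℕ) :
    qp q (q ^ (-((n+1:ℕ):ℤ))) (m+1) * ((q ^ (m+1:ℕ))⁻¹ * (1 + q ^ (2*(m+1)+1)))
      - qp q (q ^ (-((n+1:ℕ):ℤ))) m * ((q ^ (m+1:ℕ))⁻¹ * (1 - q ^ (2*(m+1))))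
    = (1 + q ^ (n+2)) * qp q (q ^ (-((n+2:ℕ):ℤ))) (m+1)
      + q * (1 - q ^ (n+1)) * qp q (q ^ (-(n:ℤ))) (m+1) := by
  have zc1 : q ^ (-((n+1:ℕ):ℤ)) = (q ^ (n+1:ℕ))⁻¹ := by rw [zpow_neg, zpow_natCast]
  have zc2 : q ^ (-((n+2:ℕ):ℤ)) = (q ^ (n+2:ℕ))⁻¹ := by rw [zpow_neg, zpow_natCast]
  have h1c : (1:ℂ) - q ^ (-((n+1:ℕ):ℤ)) ≠ 0 := by
    rw [zc1]
    intro h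
    have h2 : (q ^ (n+1:ℕ))⁻¹ = 1 := by linear_combination -h
    exact hroot (n+1) (by omega) (by rw [← inv_inv (q ^ (n+1)), h2]; norm_num)
  have e1 : qp q (q ^ (-((n+1:ℕ):ℤ))) (m+1)
      = qp q (q ^ (-((n+1:ℕ):ℤ))) m * (1 - q ^ (-((n+1:ℕ):ℤ)) * q ^ m) := qp_succ _ _ _
  have e2 : qp q (q ^ (-((n+2:ℕ):ℤ))) (m+1)
      = (1 - q ^ (-((n+2:ℕ):ℤ))) * qp q (q ^ (-((n+1:ℕ):ℤ))) m := by
    have h := qp_shift q hq (-((n+1:ℕ):ℤ)) m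
    rw [show (-((n+1:ℕ):ℤ)) - 1 = (-((n+2:ℕ):ℤ)) by push_cast; ring] at h
    exact h
  have e3 : qp q (q ^ (-((n+1:ℕ):ℤ))) (m+2)
      = (1 - q ^ (-((n+1:ℕ):ℤ))) * qp q (q ^ (-(n:ℤ))) (m+1) := by
    have h := qp_shift q hq (-(n:ℤ)) (m+1)
    rw [show (-(n:ℤ)) - 1 = (-((n+1:ℕ):ℤ)) by push_cast; ring] at h
    exact h
  have e4 : qp q (q ^ (-((n+1:ℕ):ℤ))) (m+2)
      = qp q (q ^ (-((n+1:ℕ):ℤ))) m * (1 - q ^ (-((n+1:ℕ):ℤ)) * q ^ m)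
          * (1 - q ^ (-((n+1:ℕ):ℤ)) * q ^ (m+1)) := by
    rw [qp_succ, qp_succ]
  have eB : qp q (q ^ (-(n:ℤ))) (m+1)
      = qp q (q ^ (-((n+1:ℕ):ℤ))) m * (1 - q ^ (-((n+1:ℕ):ℤ)) * q ^ m)
          * (1 - q ^ (-((n+1:ℕ):ℤ)) * q ^ (m+1)) / (1 - q ^ (-((n+1:ℕ):ℤ))) := by
    rw [eq_div_iff h1c]
    linear_combination e4 - e3
  rw [e1, e2, eB, zc1, zc2]
  have hn1 : (q:ℂ) ^ (n+1:ℕ) ≠ 0 := pow_ne_zero _ hq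
  have hn2 : (q:ℂ) ^ (n+2:ℕ) ≠ 0 := pow_ne_zero _ hq
  have hm1 : (q:ℂ) ^ (m+1:ℕ) ≠ 0 := pow_ne_zero _ hq
  have h1c' : (1:ℂ) - (q ^ (n+1:ℕ))⁻¹ ≠ 0 := by rw [← zc1]; exact h1c
  have hd1 : (q:ℂ) ^ (n+1:ℕ) - 1 ≠ 0 := sub_ne_zero.mpr (hroot (n+1) (by omega))
  have hd2 : (1:ℂ) - q ^ (n+1:ℕ) ≠ 0 := sub_ne_zero.mpr (Ne.symm (hroot (n+1) (by omega)))
  field_simp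
  ring

lemma rec' (q s z : ℂ) (hs : s ^ 2 = q) (hs0 : s ≠ 0) (hz : z ≠ 0)
    (hroot : ∀ m : ℕ, 1 ≤ m → q ^ m ≠ 1) (n : ℕ) :
    s * (z + z⁻¹) * Phi q s z (n+1)
      = (1 + q ^ (n+2)) * Phi q s z (n+2) + q * (1 - q ^ (n+1)) * Phi q s z n := by
  have hq : q ≠ 0 := by rw [← hs]; exact pow_ne_zero 2 hs0
  set G : ℕ → ℂ := fun j =>
    qp q (q ^ (-((n+1:ℕ):ℤ))) (j-1) * ((q ^ (j:ℕ))⁻¹ * (1 - q ^ (2*j)) * uu q s z j) with hG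
  have step1 : s * (z + z⁻¹) * Phi q s z (n+1)
      = ∑ k ∈ Finset.range (n+3),
          (qp q (q ^ (-((n+1:ℕ):ℤ))) k * ((q ^ (k:ℕ))⁻¹ * (1 + q ^ (2*k+1)) * uu q s z k)
           - qp q (q ^ (-((n+1:ℕ):ℤ))) k * ((q ^ (k+1:ℕ))⁻¹ * (1 - q ^ (2*(k+1))) * uu q s z (k+1))) := by
    unfold Phi
    rw [show (n+1)+2 = n+3 by omega, Finset.mul_sum]
    refine Finset.sum_congr rfl fun k _ => ?_
    have h := uu_succ q s z hs hs0 hz hroot k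
    calc s * (z + z⁻¹) * (qp q (q ^ (-((n+1:ℕ):ℤ))) k * uu q s z k)
        = qp q (q ^ (-((n+1:ℕ):ℤ))) k * (s * (z + z⁻¹) * uu q s z k) := by ring
      _ = _ := by rw [h]; ring
  have hshift : ∑ k ∈ Finset.range (n+3),
        qp q (q ^ (-((n+1:ℕ):ℤ))) k * ((q ^ (k+1:ℕ))⁻¹ * (1 - q ^ (2*(k+1))) * uu q s z (k+1))
      = ∑ k ∈ Finset.range (n+3), G k := by
    have h1 : ∀ k : ℕ,
        qp q (q ^ (-((n+1:ℕ):ℤ))) k * ((q ^ (k+1:ℕ))⁻¹ * (1 - q ^ (2*(k+1))) * uu q s z (k+1))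
        = G (k+1) := by
      intro k
      simp only [hG, Nat.add_sub_cancel]
    have h2 := Finset.sum_range_succ' G (n+3)
    have hG0 : G 0 = 0 := by simp [hG]
    have hGtop : G (n+3) = 0 := by
      simp only [hG, show n+3-1 = n+2 by omega]
      rw [qp_inv_vanish q hq (n+1) (n+2) (by omega)]
      ring
    calc ∑ k ∈ Finset.range (n+3),
          qp q (q ^ (-((n+1:ℕ):ℤ))) k * ((q ^ (k+1:ℕ))⁻¹ * (1 - q ^ (2*(k+1))) * uu q s z (k+1))
        = ∑ k ∈ Finset.range (n+3), G (k+1) := Finset.sum_congr rfl fun k _ => h1 k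
      _ = ∑ k ∈ Finset.range (n+4), G k := by rw [h2, hG0, add_zero]
      _ = ∑ k ∈ Finset.range (n+3), G k := by rw [Finset.sum_range_succ, hGtop, add_zero]
  have hR1 : (1 + q ^ (n+2)) * Phi q s z (n+2)
      = ∑ k ∈ Finset.range (n+3),
          (1 + q ^ (n+2)) * (qp q (q ^ (-((n+2:ℕ):ℤ))) k * uu q s z k) := by
    unfold Phi
    rw [show (n+2)+2 = n+4 by omega, Finset.sum_range_succ,
      qp_inv_vanish q hq (n+2) (n+3) (by omega)]
    simp [Finset.mul_sum]
  have hR2 : q * (1 - q ^ (n+1)) * Phi q s z n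
      = ∑ k ∈ Finset.range (n+3),
          q * (1 - q ^ (n+1)) * (qp q (q ^ (-(n:ℤ))) k * uu q s z k) := by
    unfold Phi
    rw [show n+3 = (n+2)+1 by omega,
      Finset.sum_range_succ (fun k => q * (1 - q ^ (n+1)) * (qp q (q ^ (-(n:ℤ))) k * uu q s z k)) (n+2),
      qp_inv_vanish q hq n (n+2) (by omega)]
    simp [Finset.mul_sum]
  rw [step1, hR1, hR2, ← Finset.sum_add_distrib]
  rw [show (∑ k ∈ Finset.range (n+3),
          (qp q (q ^ (-((n+1:ℕ):ℤ))) k * ((q ^ (k:ℕ))⁻¹ * (1 + q ^ (2*k+1)) * uu q s z k)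
           - qp q (q ^ (-((n+1:ℕ):ℤ))) k * ((q ^ (k+1:ℕ))⁻¹ * (1 - q ^ (2*(k+1))) * uu q s z (k+1))))
      = ∑ k ∈ Finset.range (n+3),
          (qp q (q ^ (-((n+1:ℕ):ℤ))) k * ((q ^ (k:ℕ))⁻¹ * (1 + q ^ (2*k+1)) * uu q s z k) - G k)
      from by rw [Finset.sum_sub_distrib, hshift, ← Finset.sum_sub_distrib]]
  refine Finset.sum_congr rfl fun k _ => ?_
  match k with
  | 0 =>
    simp only [hG, qp_zero]
    norm_num
    ring
  | (m+1) =>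
    have hc := coeff_id q hq hroot n m
    simp only [hG, Nat.add_sub_cancel]
    linear_combination (uu q s z (m+1)) * hc

lemma hermite_coeff (Q : ℂ) (hroot : ∀ m : ℕ, 1 ≤ m → Q ^ m ≠ 1) (m r : ℕ) :
    qp Q Q (m+r+2) / (qp Q Q (m+1) * qp Q Q (r+1))
      = qp Q Q (m+r+1) / (qp Q Q (m+1) * qp Q Q r)
        + qp Q Q (m+r+1) / (qp Q Q m * qp Q Q (r+1))
        - (1 - Q ^ (m+r+1)) * (qp Q Q (m+r) / (qp Q Q m * qp Q Q r)) := by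
  have hpm := qpq_ne Q hroot m
  have hpr := qpq_ne Q hroot r
  have hpm1 := qpq_ne Q hroot (m+1)
  have hpr1 := qpq_ne Q hroot (r+1)
  have key : qp Q Q (m+r+2)
      = qp Q Q (m+r+1) * (1 - Q * Q ^ r) + qp Q Q (m+r+1) * (1 - Q * Q ^ m)
        - (1 - Q ^ (m+r+1)) * qp Q Q (m+r) * ((1 - Q * Q ^ m) * (1 - Q * Q ^ r)) := by
    rw [show m+r+2 = (m+r+1)+1 by omega, qp_succ, show m+r+1 = (m+r)+1 by omega, qp_succ]
    ring
  have hc1 : qp Q Q (m+r+1) / (qp Q Q (m+1) * qp Q Q r)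
      = qp Q Q (m+r+1) * (1 - Q * Q ^ r) / (qp Q Q (m+1) * qp Q Q (r+1)) := by
    rw [div_eq_div_iff (mul_ne_zero hpm1 hpr) (mul_ne_zero hpm1 hpr1), qp_succ Q Q r]
    ring
  have hc2 : qp Q Q (m+r+1) / (qp Q Q m * qp Q Q (r+1))
      = qp Q Q (m+r+1) * (1 - Q * Q ^ m) / (qp Q Q (m+1) * qp Q Q (r+1)) := by
    rw [div_eq_div_iff (mul_ne_zero hpm hpr1) (mul_ne_zero hpm1 hpr1), qp_succ Q Q m]
    ring
  have he : qp Q Q (m+r) / (qp Q Q m * qp Q Q r)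
      = qp Q Q (m+r) * ((1 - Q * Q ^ m) * (1 - Q * Q ^ r))
          / (qp Q Q (m+1) * qp Q Q (r+1)) := by
    rw [div_eq_div_iff (mul_ne_zero hpm hpr) (mul_ne_zero hpm1 hpr1),
      qp_succ Q Q m, qp_succ Q Q r]
    ring
  rw [hc1, hc2, he, key]
  ring
lemma H_rec (Q z : ℂ) (hz : z ≠ 0) (hroot : ∀ m : ℕ, 1 ≤ m → Q ^ m ≠ 1) (n : ℕ) :
    cqHermite Q z (n+2)
      = (z + z⁻¹) * cqHermite Q z (n+1) - (1 - Q ^ (n+1)) * cqHermite Q z n := by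
  have hp : ∀ k, qp Q Q k ≠ 0 := qpq_ne Q hroot
  unfold cqHermite
  rw [show ((n+2:ℕ):ℤ) = (n:ℤ)+2 by push_cast; ring,
      show ((n+1:ℕ):ℤ) = (n:ℤ)+1 by push_cast; ring,
      show (n+2)+1 = n+3 by omega, show (n+1)+1 = n+2 by omega]
  set Bh : ℕ → ℂ := fun j =>
    (if j = 0 then 0 else qp Q Q (n+1) / (qp Q Q (j-1) * qp Q Q (n+1-(j-1))))
      * z ^ ((n:ℤ)+2-2*(j:ℤ)) with hBh
  set Eh : ℕ → ℂ := fun j =>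
    (if j = 0 then 0 else (1-Q^(n+1)) * (qp Q Q n / (qp Q Q (j-1) * qp Q Q (n-(j-1)))))
      * z ^ ((n:ℤ)+2-2*(j:ℤ)) with hEh
  have hzp : ∀ (C : ℂ) (e : ℤ), (z+z⁻¹) * (C * z^e) = C * z^(e+1) + C * z^(e-1) := by
    intro C e
    rw [zpow_add_one₀ hz, zpow_sub_one₀ hz]
    field_simp
  have hBsucc : ∀ k : ℕ, Bh (k+1)
      = qp Q Q (n+1) / (qp Q Q k * qp Q Q (n+1-k)) * z ^ (((n:ℤ)+1-2*(k:ℤ))-1) := by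
    intro k
    simp only [hBh, Nat.add_sub_cancel, if_neg (Nat.succ_ne_zero k)]
    congr 1
    push_cast
    ring
  have hEsucc : ∀ k : ℕ, Eh (k+1)
      = (1-Q^(n+1)) * (qp Q Q n / (qp Q Q k * qp Q Q (n-k)) * z ^ ((n:ℤ)-2*(k:ℤ))) := by
    intro k
    simp only [hEh, Nat.add_sub_cancel, if_neg (Nat.succ_ne_zero k)]
    rw [show (n:ℤ)+2-2*((k+1:ℕ):ℤ) = (n:ℤ)-2*(k:ℤ) by push_cast; ring]
    ring
  have hA : (z + z⁻¹) * (∑ k ∈ Finset.range (n+2),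
        qp Q Q (n+1) / (qp Q Q k * qp Q Q (n+1-k)) * z ^ ((n:ℤ)+1-2*(k:ℤ)))
      = (∑ k ∈ Finset.range (n+2),
          qp Q Q (n+1) / (qp Q Q k * qp Q Q (n+1-k)) * z ^ ((n:ℤ)+2-2*(k:ℤ)))
        + ∑ j ∈ Finset.range (n+3), Bh j := by
    calc (z + z⁻¹) * (∑ k ∈ Finset.range (n+2),
          qp Q Q (n+1) / (qp Q Q k * qp Q Q (n+1-k)) * z ^ ((n:ℤ)+1-2*(k:ℤ)))
        = ∑ k ∈ Finset.range (n+2), (z + z⁻¹) *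
            (qp Q Q (n+1) / (qp Q Q k * qp Q Q (n+1-k)) * z ^ ((n:ℤ)+1-2*(k:ℤ))) :=
          Finset.mul_sum _ _ _
      _ = ∑ k ∈ Finset.range (n+2),
            (qp Q Q (n+1) / (qp Q Q k * qp Q Q (n+1-k)) * z ^ (((n:ℤ)+1-2*(k:ℤ))+1)
             + qp Q Q (n+1) / (qp Q Q k * qp Q Q (n+1-k)) * z ^ (((n:ℤ)+1-2*(k:ℤ))-1)) :=
          Finset.sum_congr rfl fun k _ => hzp _ _
      _ = _ := by
        rw [Finset.sum_add_distrib]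
        congr 1
        · refine Finset.sum_congr rfl fun k _ => ?_
          rw [show ((n:ℤ)+1-2*(k:ℤ))+1 = (n:ℤ)+2-2*(k:ℤ) by ring]
        · have h0 : Bh 0 = 0 := by simp [hBh]
          rw [Finset.sum_range_succ' Bh (n+2), h0, add_zero]
          exact Finset.sum_congr rfl fun k _ => (hBsucc k).symm
  have hE : (1 - Q^(n+1)) * (∑ k ∈ Finset.range (n+1),
        qp Q Q n / (qp Q Q k * qp Q Q (n-k)) * z ^ ((n:ℤ)-2*(k:ℤ)))
      = ∑ j ∈ Finset.range (n+2), Eh j := by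
    have h0 : Eh 0 = 0 := by simp [hEh]
    rw [Finset.sum_range_succ' Eh (n+1), h0, add_zero, Finset.mul_sum]
    exact (Finset.sum_congr rfl fun k _ => (hEsucc k)).symm
  rw [hA, hE]
  rw [Finset.sum_range_succ
      (fun k => qp Q Q (n+2) / (qp Q Q k * qp Q Q (n+2-k)) * z ^ ((n:ℤ)+2-2*(k:ℤ))) (n+2),
    Finset.sum_range_succ Bh (n+2)]
  have hT : qp Q Q (n+2) / (qp Q Q (n+2) * qp Q Q (n+2-(n+2))) * z ^ ((n:ℤ)+2-2*((n+2:ℕ):ℤ))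
      = Bh (n+2) := by
    simp only [hBh, if_neg (by omega : ¬ n+2 = 0)]
    rw [show n+2-1 = n+1 by omega, show n+1-(n+1) = 0 by omega, show n+2-(n+2) = 0 by omega,
      qp_zero, mul_one, mul_one, div_self (hp (n+2)), div_self (hp (n+1))]
  have main : ∑ k ∈ Finset.range (n+2),
        qp Q Q (n+2) / (qp Q Q k * qp Q Q (n+2-k)) * z ^ ((n:ℤ)+2-2*(k:ℤ))
      = ∑ k ∈ Finset.range (n+2),
          (qp Q Q (n+1) / (qp Q Q k * qp Q Q (n+1-k)) * z ^ ((n:ℤ)+2-2*(k:ℤ)) + Bh k - Eh k) := by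
    refine Finset.sum_congr rfl fun k hk => ?_
    have hk' : k ≤ n+1 := by have := Finset.mem_range.mp hk; omega
    match k with
    | 0 =>
      simp only [hBh, hEh]
      norm_num
      left
      rw [qp_zero, one_mul, one_mul, div_self (hp (n+2)), div_self (hp (n+1))]
    | (m+1) =>
      have hm : m ≤ n := by omega
      obtain ⟨r, hr⟩ : ∃ r, n = m + r := ⟨n - m, by omega⟩
      subst hr
      simp only [hBh, hEh, if_neg (Nat.succ_ne_zero m), Nat.add_sub_cancel]
      rw [show m+r+2-(m+1) = r+1 by omega, show m+r+1-(m+1) = r by omega,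
        show m+r+1-m = r+1 by omega, show m+r-m = r by omega]
      have hc := hermite_coeff Q hroot m r
      linear_combination (z ^ (((m+r:ℕ):ℤ)+2-2*((m+1:ℕ):ℤ))) * hc
  rw [main]
  rw [Finset.sum_sub_distrib, Finset.sum_add_distrib]
  linear_combination hT
lemma AW_eq (q s z : ℂ) (hq : q ≠ 0) (hs : s ^ 2 = q) (n : ℕ) :
    AW q s (-s) 0 0 z n = Phi q s z n := by
  unfold AW Phi
  symm
  rw [show n+2 = (n+1)+1 by omega, Finset.sum_range_succ,
    qp_inv_vanish q hq n (n+1) (by omega), zero_mul, add_zero]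
  symm
  refine Finset.sum_congr rfl fun k _ => ?_
  rw [show s * -s * 0 * 0 = (0:ℂ) by ring, mul_zero, qp_base_zero,
    show s * (0:ℂ) = 0 by ring, qp_base_zero, show s * -s = -q by rw [← hs]; ring]
  unfold uu
  ring
lemma main_aux (q s z : ℂ) (hq : q ≠ 0) (hs : s ^ 2 = q) (hs0 : s ≠ 0) (hz : z ≠ 0)
    (hroot : ∀ m : ℕ, 1 ≤ m → q ^ m ≠ 1) :
    ∀ n : ℕ, s ^ (-(n:ℤ)) * qp q (-q) n * Phi q s z n = cqHermite (q ^ 2) z n := by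
  have hroot2 : ∀ m : ℕ, 1 ≤ m → (q^2)^m ≠ 1 := by
    intro m hm h
    exact hroot (2*m) (by omega) (by rwa [pow_mul])
  intro n
  induction n using Nat.strong_induction_on with
  | _ n ih =>
    match n with
    | 0 =>
      unfold Phi cqHermite uu
      simp [Finset.sum_range_succ, qp]
    | 1 =>
      have h1 : (1:ℂ) - q ≠ 0 := sub_ne_zero.mpr (Ne.symm (by simpa using hroot 1 (by omega)))
      have h2 : (1:ℂ) + q ≠ 0 := by simpa using one_add_pow_ne q hroot 0
      have h4 : (1:ℂ) - q^2 ≠ 0 := sub_ne_zero.mpr (Ne.symm (hroot 2 (by omega)))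
      have hH1 : cqHermite (q^2) z 1 = z + z⁻¹ := by
        unfold cqHermite
        rw [Finset.sum_range_succ, Finset.sum_range_succ, Finset.sum_range_zero]
        norm_num [qp_succ, qp_zero]
        rw [div_self h4]
        ring
      rw [hH1]
      unfold Phi uu
      rw [Finset.sum_range_succ, Finset.sum_range_succ, Finset.sum_range_succ, Finset.sum_range_zero,
        qp_inv_vanish q hq 1 2 (by omega)]
      simp only [qp_succ, qp_zero, zero_mul, add_zero, zero_add, pow_zero, pow_one, mul_one, one_mul]
      rw [show ((-(1:ℕ):ℤ)) = (-1:ℤ) by norm_num, zpow_neg_one, zpow_neg_one]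
      subst hs
      field_simp
      have hd : s^3*z - s^7*z ≠ 0 := by
        have h4' : (1:ℂ) - s^4 ≠ 0 := by
          intro h; apply h4; rw [show ((s:ℂ)^2)^2 = s^4 by ring]; exact h
        have := mul_ne_zero (mul_ne_zero (pow_ne_zero 3 hs0) hz) h4'
        intro h; apply this; rw [← h]; ring
      rw [sub_neg_eq_add]
      field_simp
      ring
    | (m+2) =>
      have h1 := ih (m+1) (by omega)
      have h0 := ih m (by omega)
      have hr := rec' q s z hs hs0 hz hroot m
      have hH := H_rec (q^2) z hz hroot2 m
      rw [hH, ← h1, ← h0]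
      have hz2 : s ^ (-((m+2:ℕ)):ℤ) = (s^(m+2:ℕ))⁻¹ := by rw [zpow_neg, zpow_natCast]
      have hz1 : s ^ (-((m+1:ℕ)):ℤ) = (s^(m+1:ℕ))⁻¹ := by rw [zpow_neg, zpow_natCast]
      have hz0 : s ^ (-(m:ℕ):ℤ) = (s^(m:ℕ))⁻¹ := by rw [zpow_neg, zpow_natCast]
      rw [hz2, hz1, hz0]
      have hr2 : (1 + q^(m+2)) * Phi q s z (m+2)
          = s*(z+z⁻¹)*Phi q s z (m+1) - q*(1-q^(m+1))*Phi q s z m := by linear_combination -hr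
      calc (s^(m+2:ℕ))⁻¹ * qp q (-q) (m+2) * Phi q s z (m+2)
          = (s^(m+2:ℕ))⁻¹ * qp q (-q) (m+1) * ((1 + q^(m+2)) * Phi q s z (m+2)) := by
            rw [qp_succ q (-q) (m+1)]
            ring
        _ = (s^(m+2:ℕ))⁻¹ * qp q (-q) (m+1) *
              (s*(z+z⁻¹)*Phi q s z (m+1) - q*(1-q^(m+1))*Phi q s z m) := by rw [hr2]
        _ = (z+z⁻¹) * ((s^(m+1:ℕ))⁻¹ * qp q (-q) (m+1) * Phi q s z (m+1))
              - (1-(q^2)^(m+1)) * ((s^(m:ℕ))⁻¹ * qp q (-q) m * Phi q s z m) := by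
            rw [qp_succ q (-q) m]
            subst hs
            field_simp
            ring

theorem stmt11 (q s z : ℂ) (n : ℕ)
    (hq : q ≠ 0) (hs : s ^ 2 = q) (hs0 : s ≠ 0) (hz : z ≠ 0)
    (hroot : ∀ m : ℕ, 1 ≤ m → q ^ m ≠ 1)
    (hmq : ∀ k ∈ Finset.range (n + 1), qp q (-q) k ≠ 0) :
    s ^ (-(n : ℤ)) * qp q (-q) n * AW q s (-s) 0 0 z n = cqHermite (q ^ 2) z n := by
  rw [AW_eq q s z hq hs n]
  exact main_aux q s z hq hs hs0 hz hroot n
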